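/- Let x₀ < x₁ < ⋯ < x_n be real numbers, 0 ≤ i₀ ≤ n−1, and f_L ≠ f_R real numbers. Let p be the unique polynomial of degree at most n with p(x_i) = f_L for i ≤ i₀ and p(x_i) = f_R for i > i₀. Then for each s with 0 ≤ s ≤ n, the polynomial p^{(s)} has exact degree n − s, and for 1 ≤ s ≤ n it has exactly n − s real roots (counted without multiplicity, all simple). -/

import Mathlib

open Polynomial Set

/-- Rolle for polynomials. -/
lemma poly_rolle (q : Polynomial ℝ) {a b : ℝ} (hab : a < b)
    (h : q.eval a = q.eval b) :
    ∃ c ∈ Set.Ioo a b, (Polynomial.derivative q).eval c = 0 := by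
  obtain ⟨c, hc, hc0⟩ := exists_hasDerivAt_eq_zero hab q.continuousOn h
    (fun y _ => q.hasDerivAt y)
  exact ⟨c, hc, hc0⟩


lemma natDeg_deriv_real (q : Polynomial ℝ) (h : q.natDegree ≠ 0) :
    (Polynomial.derivative q).natDegree = q.natDegree - 1 := by
  have hcoeff : (Polynomial.derivative q).coeff (q.natDegree - 1) ≠ 0 := by
    rw [Polynomial.coeff_derivative]
    have h1 : q.natDegree - 1 + 1 = q.natDegree := by omega
    rw [h1]
    apply mul_ne_zero
    · have hq : q ≠ 0 := fun h0 => h (by simp [h0])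
      rw [Polynomial.coeff_natDegree]
      exact Polynomial.leadingCoeff_ne_zero.2 hq
    · positivity
  exact le_antisymm (Polynomial.natDegree_derivative_le q)
    (Polynomial.le_natDegree_of_ne_zero hcoeff)

/-- Counting lemma: each index `i ∈ t` with equal values at consecutive nodes
contributes a distinct root of the derivative. -/
lemma card_le_roots_deriv (q : Polynomial ℝ) (hq' : Polynomial.derivative q ≠ 0)
    (k : ℕ) (z : Fin (k + 1) → ℝ) (hz : StrictMono z)
    (t : Finset (Fin k)) (h : ∀ i ∈ t, q.eval (z i.castSucc) = q.eval (z i.succ)) :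
    t.card ≤ (Polynomial.derivative q).roots.toFinset.card := by
  have h' : ∀ i ∈ t, ∃ c, c ∈ Set.Ioo (z i.castSucc) (z i.succ) ∧
      (Polynomial.derivative q).eval c = 0 := by
    intro i hi
    have : (i.castSucc : Fin (k+1)) < i.succ := Fin.castSucc_lt_succ
    obtain ⟨c, hc, hc0⟩ := poly_rolle q (hz this) (h i hi)
    exact ⟨c, hc, hc0⟩
  choose! c hc1 hc2 using h'
  apply Finset.card_le_card_of_injOn c
  · intro i hi
    rw [Finset.mem_coe, Multiset.mem_toFinset, mem_roots hq']
    exact hc2 i hi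
  · intro i hi j hj hij
    by_contra hne
    rcases lt_or_gt_of_ne hne with hlt | hlt
    · have h1 : c i < z j.castSucc := lt_of_lt_of_le (hc1 i hi).2
        (hz.monotone (Fin.succ_le_castSucc_iff.2 hlt))
      exact absurd hij (ne_of_lt (h1.trans (hc1 j hj).1))
    · have h1 : c j < z i.castSucc := lt_of_lt_of_le (hc1 j hj).2
        (hz.monotone (Fin.succ_le_castSucc_iff.2 hlt))
      exact absurd hij.symm (ne_of_lt (h1.trans (hc1 i hi).1))

/-- If `q` has degree `m ≥ 1` and `m` simple roots, its derivative has `m - 1`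
simple roots. -/
lemma deriv_simple_roots (q : Polynomial ℝ) {m : ℕ} (hm : 1 ≤ m)
    (hdeg : q.natDegree = m) (hcard : Multiset.card q.roots = m) (hnd : q.roots.Nodup)
    (hq' : Polynomial.derivative q ≠ 0) :
    Multiset.card (Polynomial.derivative q).roots = m - 1 ∧
      (Polynomial.derivative q).roots.Nodup := by
  have hdeg' : (Polynomial.derivative q).natDegree = m - 1 := by
    rw [natDeg_deriv_real q (by omega), hdeg]
  have hub : Multiset.card (Polynomial.derivative q).roots ≤ m - 1 :=
    hdeg' ▸ (Polynomial.card_roots' _)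
  have htf : q.roots.toFinset.card = m := by
    rw [Multiset.toFinset_card_eq_card_iff_nodup.2 hnd, hcard]
  obtain ⟨m', rfl⟩ : ∃ m', m = m' + 1 := ⟨m - 1, by omega⟩
  -- enumerate the roots in increasing order
  set e := q.roots.toFinset.orderIsoOfFin htf with he
  have hq : q ≠ 0 := by
    intro h; rw [h] at hdeg; simp at hdeg
  have hlb : m' ≤ (Polynomial.derivative q).roots.toFinset.card := by
    have := card_le_roots_deriv q hq' m' (fun i => (e i : ℝ))
      (fun i j hij => Subtype.coe_lt_coe.2 (e.lt_iff_lt.2 hij))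
      Finset.univ ?_
    · simpa using this
    · intro i _
      have h1 : q.eval ((e i.castSucc : ℝ)) = 0 := by
        have := (e i.castSucc).2
        rw [Multiset.mem_toFinset, mem_roots hq] at this
        exact this
      have h2 : q.eval ((e i.succ : ℝ)) = 0 := by
        have := (e i.succ).2
        rw [Multiset.mem_toFinset, mem_roots hq] at this
        exact this
      rw [h1, h2]
  have hle : (Polynomial.derivative q).roots.toFinset.card ≤
      Multiset.card (Polynomial.derivative q).roots :=
    Multiset.toFinset_card_le _
  constructor
  · omega
  · rw [← Multiset.toFinset_card_eq_card_iff_nodup]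
    omega

/-- Step-data interpolation: the `s`-th derivative of the interpolating polynomial of
step data has exact degree `n - s`, and for `1 ≤ s ≤ n` it has exactly `n - s` real
roots, all simple. -/
theorem step_interpolation_derivatives
    (n : ℕ) (hn : 1 ≤ n) (x : Fin (n + 1) → ℝ) (hx : StrictMono x)
    (i₀ : ℕ) (hi₀ : i₀ ≤ n - 1) (fL fR : ℝ) (hf : fL ≠ fR)
    (p : Polynomial ℝ) (hdeg : p.natDegree ≤ n)
    (hp : ∀ i : Fin (n + 1), p.eval (x i) = if (i : ℕ) ≤ i₀ then fL else fR) :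
    ∀ s : ℕ, s ≤ n →
      ((Polynomial.derivative^[s] p).natDegree = n - s ∧
        (Polynomial.derivative^[s] p).coeff (n - s) ≠ 0) ∧
      (1 ≤ s →
        Multiset.card (Polynomial.derivative^[s] p).roots = n - s ∧
        (Polynomial.derivative^[s] p).roots.Nodup) := by
  -- p is not constant
  have hpne : Polynomial.derivative p ≠ 0 := by
    intro h
    obtain ⟨a, ha⟩ : ∃ a, p = Polynomial.C a := ⟨_, Polynomial.eq_C_of_derivative_eq_zero h⟩
    have h1 := hp ⟨0, by omega⟩
    have h2 := hp ⟨n, by omega⟩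
    simp [ha] at h1 h2
    rw [if_neg (by omega : ¬ (n ≤ i₀))] at h2
    exact hf (h1 ▸ h2 ▸ rfl)
  -- step 1 : p' has at least n - 1 distinct roots
  have key : n - 1 ≤ (Polynomial.derivative p).roots.toFinset.card := by
    have := card_le_roots_deriv p hpne n x hx
      (Finset.univ.filter (fun i : Fin n => (i : ℕ) ≠ i₀)) ?_
    · have hc : (Finset.univ.filter (fun i : Fin n => (i : ℕ) ≠ i₀)).card = n - 1 := by
        have hi₀n : i₀ < n := by omega
        have heq : (Finset.univ.filter (fun i : Fin n => (i : ℕ) ≠ i₀)) =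
            Finset.univ.erase ⟨i₀, hi₀n⟩ := by
          ext i
          simp [Fin.ext_iff]
        rw [heq, Finset.card_erase_of_mem (Finset.mem_univ _), Finset.card_univ,
          Fintype.card_fin]
      omega
    · intro i hi
      simp only [Finset.mem_filter] at hi
      rw [hp, hp]
      simp only [Fin.coe_castSucc, Fin.val_succ]
      rcases lt_or_gt_of_ne hi.2 with h | h
      · rw [if_pos (by omega), if_pos (by omega)]
      · rw [if_neg (by omega), if_neg (by omega)]
  have hub1 : Multiset.card (Polynomial.derivative p).roots ≤ p.natDegree - 1 := by
    calc Multiset.card (Polynomial.derivative p).roots ≤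
        (Polynomial.derivative p).natDegree := Polynomial.card_roots' _
      _ ≤ p.natDegree - 1 := Polynomial.natDegree_derivative_le p
  have hle : (Polynomial.derivative p).roots.toFinset.card ≤
      Multiset.card (Polynomial.derivative p).roots := Multiset.toFinset_card_le _
  have hge1 : 1 ≤ p.natDegree := by
    by_contra hcon
    exact hpne (by
      have : p.natDegree = 0 := by omega
      rw [Polynomial.eq_C_of_natDegree_eq_zero this]
      exact Polynomial.derivative_C)
  have hdp : p.natDegree = n := by omega
  -- therefore p' has exactly n-1 roots, all simple
  have hdp' : (Polynomial.derivative p).natDegree = n - 1 := by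
    rw [natDeg_deriv_real p (by omega), hdp]
  have step1 : Multiset.card (Polynomial.derivative p).roots = n - 1 ∧
      (Polynomial.derivative p).roots.Nodup := by
    constructor
    · omega
    · rw [← Multiset.toFinset_card_eq_card_iff_nodup]
      omega
  -- derivatives don't vanish and have exact degree
  have hne : ∀ s, s ≤ n → Polynomial.derivative^[s] p ≠ 0 ∧
      (Polynomial.derivative^[s] p).natDegree = n - s := by
    intro s
    induction s with
    | zero =>
      intro _
      constructor
      · intro h
        simp only [Function.iterate_zero_apply] at h
        rw [h] at hdp; simp at hdp; omega
      · simpa using hdp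
    | succ k ih =>
      intro hs
      obtain ⟨h1, h2⟩ := ih (by omega)
      rw [Function.iterate_succ_apply']
      have hk : (Polynomial.derivative^[k] p).natDegree ≠ 0 := by omega
      have hd := natDeg_deriv_real (Polynomial.derivative^[k] p) hk
      constructor
      · intro h
        have := Polynomial.natDegree_eq_zero_of_derivative_eq_zero h
        omega
      · omega
  -- roots statement by induction
  have hroots : ∀ s, 1 ≤ s → s ≤ n →
      Multiset.card (Polynomial.derivative^[s] p).roots = n - s ∧
      (Polynomial.derivative^[s] p).roots.Nodup := by
    intro s
    induction s with
    | zero => omega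
    | succ k ih =>
      intro _ hk
      rcases Nat.eq_or_lt_of_le (show 1 ≤ k + 1 from by omega) with h1 | h1
      · have : k = 0 := by omega
        subst this
        simpa using step1
      · have hk1 : 1 ≤ k := by omega
        obtain ⟨hc, hnd⟩ := ih hk1 (by omega)
        obtain ⟨hnz, hdg⟩ := hne k (by omega)
        obtain ⟨hnz', _⟩ := hne (k+1) (by omega)
        rw [Function.iterate_succ_apply'] at hnz' ⊢
        have := deriv_simple_roots (Polynomial.derivative^[k] p) (m := n - k)
          (by omega) hdg hc hnd hnz'
        constructor
        · rw [this.1]; omega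
        · exact this.2
  intro s hs
  obtain ⟨hnz, hdg⟩ := hne s hs
  refine ⟨⟨hdg, ?_⟩, fun h1 => hroots s h1 hs⟩
  rw [← hdg]
  exact fun h => hnz (Polynomial.leadingCoeff_eq_zero.1 h)
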